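/- Let A be an n×n complex matrix, let k be a natural number, and let D : ℂ^k → ℂ^{n×n} be a ℂ-linear map. Then the deformation 𝒜(δ) = A + D(δ) of A is versal if and only if ℂ^{n×n} = T(A) + range(D), where T(A) = { XA − AX : X ∈ ℂ^{n×n} } and range(D) is the image of the linear map D. -/

import Mathlib

open Matrix

/-- A deformation `𝒜` of an `n × n` complex matrix `A` (a holomorphic map defined near `0`
with `𝒜 0 = A`, here given on all of `ℂ^k`) is *versal* if every deformation `ℬ` of `A`
(in any number `l` of parameters) is equivalent to a deformation induced from `𝒜`:
there are a holomorphic map `φ` with `φ 0 = 0` and a holomorphic deformation `𝓘` of the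
identity matrix such that `ℬ ε = (𝓘 ε)⁻¹ * 𝒜 (φ ε) * 𝓘 ε` near `0`. -/
def IsVersal (n k : ℕ) (A : Matrix (Fin n) (Fin n) ℂ)
    (𝒜 : (Fin k → ℂ) → Matrix (Fin n) (Fin n) ℂ) : Prop :=
  ∀ (l : ℕ) (ℬ : (Fin l → ℂ) → Matrix (Fin n) (Fin n) ℂ),
    (∀ i j, AnalyticAt ℂ (fun ε => ℬ ε i j) 0) → ℬ 0 = A →
    ∃ (φ : (Fin l → ℂ) → (Fin k → ℂ)) (𝓘 : (Fin l → ℂ) → Matrix (Fin n) (Fin n) ℂ),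
      (∀ i, AnalyticAt ℂ (fun ε => φ ε i) 0) ∧ φ 0 = 0 ∧
      (∀ i j, AnalyticAt ℂ (fun ε => 𝓘 ε i j) 0) ∧ 𝓘 0 = 1 ∧
      ∀ᶠ ε in nhds 0, IsUnit (𝓘 ε) ∧ ℬ ε = (𝓘 ε)⁻¹ * 𝒜 (φ ε) * 𝓘 ε

attribute [local instance] Matrix.linftyOpNormedRing Matrix.linftyOpNormedAlgebra

noncomputable section


variable {n l : ℕ}

/-- The linear equivalence between the pi type and matrices. -/
def piToMatrixL (n : ℕ) : (Fin n → Fin n → ℂ) ≃ₗ[ℂ] Matrix (Fin n) (Fin n) ℂ :=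
  { Matrix.of with map_add' := fun _ _ => rfl, map_smul' := fun _ _ => rfl }

theorem analyticAt_matrix_iff {E : Type*} [NormedAddCommGroup E] [NormedSpace ℂ E]
    {f : E → Matrix (Fin n) (Fin n) ℂ} {x : E} :
    AnalyticAt ℂ f x ↔ ∀ i j, AnalyticAt ℂ (fun ε => f ε i j) x := by
  constructor
  · intro h i j
    exact ((LinearMap.toContinuousLinearMap
      ({ toFun := fun A => A i j, map_add' := fun _ _ => rfl,
         map_smul' := fun _ _ => rfl } : Matrix (Fin n) (Fin n) ℂ →ₗ[ℂ] ℂ)).analyticAt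
      (f x)).comp h
  · intro h
    have h1 : AnalyticAt ℂ (fun ε => (fun i j => f ε i j)) x := by
      apply AnalyticAt.pi
      intro i
      exact AnalyticAt.pi fun j => h i j
    exact (((piToMatrixL n).toContinuousLinearEquiv :
      (Fin n → Fin n → ℂ) →L[ℂ] Matrix (Fin n) (Fin n) ℂ).analyticAt _).comp h1

theorem arnold_easy_dir (n k : ℕ) (A : Matrix (Fin n) (Fin n) ℂ)
    (D : (Fin k → ℂ) →ₗ[ℂ] Matrix (Fin n) (Fin n) ℂ)
    (hv : IsVersal n k A (fun δ => A + D δ)) :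
    LinearMap.range (LinearMap.mulRight ℂ A - LinearMap.mulLeft ℂ A) ⊔ LinearMap.range D
      = (⊤ : Submodule ℂ (Matrix (Fin n) (Fin n) ℂ)) := by
  rw [eq_top_iff]
  intro B _
  -- the one-parameter deformation `A + t • B`
  obtain ⟨φ, 𝓘, hφa, hφ0, h𝓘a, h𝓘0, hev⟩ :=
    hv 1 (fun ε => A + ε 0 • B)
      (by
        intro i j
        simp only [Matrix.add_apply, Matrix.smul_apply, smul_eq_mul]
        exact analyticAt_const.add
          ((((ContinuousLinearMap.proj (R := ℂ) (φ := fun _ : Fin 1 => ℂ) 0)).analyticAt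
            0).mul analyticAt_const))
      (by simp)
  -- the embedding `ℂ → (Fin 1 → ℂ)`
  set c : ℂ →L[ℂ] (Fin 1 → ℂ) := ContinuousLinearMap.pi fun _ => ContinuousLinearMap.id ℂ ℂ with hc
  have hc0 : c 0 = 0 := by funext i; rfl
  -- the matrix-valued functions of one variable
  set IM : ℂ → Matrix (Fin n) (Fin n) ℂ := fun t => 𝓘 (c t) with hIM
  have hIMa : AnalyticAt ℂ IM 0 := by
    rw [analyticAt_matrix_iff]
    intro i j
    have h1 : AnalyticAt ℂ (fun ε => 𝓘 ε i j) (c 0) := by rw [hc0]; exact h𝓘a i j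
    exact h1.comp (c.analyticAt 0)
  have hφca : AnalyticAt ℂ (fun t => φ (c t)) 0 := by
    apply AnalyticAt.pi
    intro q
    have h1 : AnalyticAt ℂ (fun ε => φ ε q) (c 0) := by rw [hc0]; exact hφa q
    exact h1.comp (c.analyticAt 0)
  set X : Matrix (Fin n) (Fin n) ℂ := deriv IM 0 with hX
  set v : Fin k → ℂ := deriv (fun t => φ (c t)) 0 with hv'
  have hIMd : HasDerivAt IM X 0 := hIMa.differentiableAt.hasDerivAt
  have hφcd : HasDerivAt (fun t => φ (c t)) v 0 := hφca.differentiableAt.hasDerivAt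
  have hBMd : HasDerivAt (fun t => A + c t 0 • B) B 0 := by
    have : HasDerivAt (fun t : ℂ => A + t • B) B 0 := by
      have h := ((hasDerivAt_id (0:ℂ)).smul_const B).const_add A
      simp only [id_eq, id, one_smul] at h
      exact h
    exact this
  have hADd : HasDerivAt (fun t => A + D (φ (c t))) (D v) 0 := by
    have h2 : HasDerivAt (fun t => (LinearMap.toContinuousLinearMap D) (φ (c t)))
        ((LinearMap.toContinuousLinearMap D) v) 0 :=
      (LinearMap.toContinuousLinearMap D).hasFDerivAt.comp_hasDerivAt 0 hφcd
    have h3 := h2.const_add A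
    simp only [LinearMap.coe_toContinuousLinearMap'] at h3
    exact h3
  -- the eventual equation, multiplied out
  have hev' : (fun t => IM t * (A + c t 0 • B)) =ᶠ[nhds (0:ℂ)]
      (fun t => (A + D (φ (c t))) * IM t) := by
    have htends : Filter.Tendsto c (nhds 0) (nhds 0) := by
      have := c.continuous.tendsto 0
      rwa [hc0] at this
    filter_upwards [htends.eventually hev] with t ht
    obtain ⟨hu, heq⟩ := ht
    have hdet : IsUnit (𝓘 (c t)).det := (Matrix.isUnit_iff_isUnit_det _).mp hu
    calc IM t * (A + c t 0 • B)
        = 𝓘 (c t) * ((𝓘 (c t))⁻¹ * (A + D (φ (c t))) * 𝓘 (c t)) := by rw [← heq]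
      _ = (𝓘 (c t) * (𝓘 (c t))⁻¹) * (A + D (φ (c t))) * 𝓘 (c t) := by
          simp only [Matrix.mul_assoc]
      _ = (A + D (φ (c t))) * IM t := by
          rw [Matrix.mul_nonsing_inv _ hdet, Matrix.one_mul]
  -- differentiate both sides at 0
  have hL : HasDerivAt (fun t => IM t * (A + c t 0 • B)) (X * A + B) 0 := by
    have := hIMd.mul hBMd
    simp only [hc0] at this ⊢
    have h0 : IM 0 = 1 := h𝓘0
    simp [h0] at this
    exact this
  have hR : HasDerivAt (fun t => (A + D (φ (c t))) * IM t) (D v + A * X) 0 := by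
    have := hADd.mul hIMd
    have h0 : IM 0 = 1 := h𝓘0
    simp [h0, hφ0] at this
    exact this
  have hL' : HasDerivAt (fun t => (A + D (φ (c t))) * IM t) (X * A + B) 0 :=
    hL.congr_of_eventuallyEq hev'.symm
  have key : X * A + B = D v + A * X := hL'.unique hR
  have hB : B = A * X - X * A + D v := by
    calc B = (X * A + B) - X * A := by abel
    _ = (D v + A * X) - X * A := by rw [key]
    _ = A * X - X * A + D v := by abel
  rw [hB]
  refine Submodule.add_mem_sup ⟨-X, ?_⟩ ⟨v, rfl⟩
  simp only [LinearMap.sub_apply, LinearMap.mulRight_apply, LinearMap.mulLeft_apply,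
    neg_mul, mul_neg, sub_neg_eq_add]
  abel


theorem arnold_hard_dir (n k : ℕ) (A : Matrix (Fin n) (Fin n) ℂ)
    (D : (Fin k → ℂ) →ₗ[ℂ] Matrix (Fin n) (Fin n) ℂ)
    (htop : LinearMap.range (LinearMap.mulRight ℂ A - LinearMap.mulLeft ℂ A) ⊔ LinearMap.range D
      = (⊤ : Submodule ℂ (Matrix (Fin n) (Fin n) ℂ))) :
    IsVersal n k A (fun δ => A + D δ) := by
  classical
  intro l ℬ hℬa hℬ0
  -- the surjective linear map (X, w) ↦ X * A - A * X - D w and a right inverse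
  set L : ((Matrix (Fin n) (Fin n) ℂ) × (Fin k → ℂ)) →ₗ[ℂ] (Matrix (Fin n) (Fin n) ℂ) :=
    (LinearMap.mulRight ℂ A - LinearMap.mulLeft ℂ A).coprod (-D) with hLdef
  have hLtop : LinearMap.range L = ⊤ := by
    rw [hLdef, LinearMap.range_coprod, LinearMap.range_neg, htop]
  obtain ⟨R, hR⟩ := L.exists_rightInverse_of_surjective hLtop
  have key : ∀ Y : (Matrix (Fin n) (Fin n) ℂ), (R Y).1 * A - A * (R Y).1 - D ((R Y).2) = Y := by
    intro Y
    have h1 : L (R Y) = Y := by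
      have := LinearMap.ext_iff.1 hR Y
      simpa using this
    simpa [hLdef, LinearMap.coprod_apply, sub_eq_add_neg,
      LinearMap.mulRight_apply, LinearMap.mulLeft_apply] using h1
  set Rc : (Matrix (Fin n) (Fin n) ℂ) →L[ℂ] ((Matrix (Fin n) (Fin n) ℂ) × (Fin k → ℂ)) := LinearMap.toContinuousLinearMap R with hRc
  set Xof : (Matrix (Fin n) (Fin n) ℂ) →L[ℂ] (Matrix (Fin n) (Fin n) ℂ) := (ContinuousLinearMap.fst ℂ (Matrix (Fin n) (Fin n) ℂ) (Fin k → ℂ)).comp Rc with hXof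
  set wof : (Matrix (Fin n) (Fin n) ℂ) →L[ℂ] (Fin k → ℂ) := (ContinuousLinearMap.snd ℂ (Matrix (Fin n) (Fin n) ℂ) (Fin k → ℂ)).comp Rc with hwof
  have hXW : ∀ Y : (Matrix (Fin n) (Fin n) ℂ), Xof Y * A - A * Xof Y - D (wof Y) = Y := by
    intro Y
    simpa [hXof, hwof, hRc] using key Y
  have hℬM : AnalyticAt ℂ ℬ 0 := analyticAt_matrix_iff.2 hℬa
  -- the map whose zero set gives the conjugation
  set G : (Matrix (Fin n) (Fin n) ℂ) × (Fin l → ℂ) → (Matrix (Fin n) (Fin n) ℂ) := fun p =>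
    (1 + Xof p.1) * ℬ p.2 - (A + D (wof p.1)) * (1 + Xof p.1) with hGdef
  have hG00 : G 0 = 0 := by
    simp [hGdef, hℬ0]
  set Φ : (Matrix (Fin n) (Fin n) ℂ) × (Fin l → ℂ) → (Matrix (Fin n) (Fin n) ℂ) × (Fin l → ℂ) := fun p => (G p, p.2) with hΦdef
  have hΦ00 : Φ 0 = 0 := by
    rw [hΦdef]
    simp only [hG00]
    rfl
  -- analyticity of Φ at 0
  have hXofa : AnalyticAt ℂ (fun p : (Matrix (Fin n) (Fin n) ℂ) × (Fin l → ℂ) => Xof p.1) 0 :=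
    (Xof.comp (ContinuousLinearMap.fst ℂ (Matrix (Fin n) (Fin n) ℂ) (Fin l → ℂ))).analyticAt 0
  have hf1a : AnalyticAt ℂ (fun p : (Matrix (Fin n) (Fin n) ℂ) × (Fin l → ℂ) => 1 + Xof p.1) 0 := analyticAt_const.add hXofa
  have hf2a : AnalyticAt ℂ (fun p : (Matrix (Fin n) (Fin n) ℂ) × (Fin l → ℂ) => ℬ p.2) 0 :=
    AnalyticAt.comp (g := ℬ) (f := fun p : (Matrix (Fin n) (Fin n) ℂ) × (Fin l → ℂ) => p.2) (x := 0) hℬM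
      ((ContinuousLinearMap.snd ℂ (Matrix (Fin n) (Fin n) ℂ) (Fin l → ℂ)).analyticAt 0)
  have hf3a : AnalyticAt ℂ (fun p : (Matrix (Fin n) (Fin n) ℂ) × (Fin l → ℂ) => A + D (wof p.1)) 0 := by
    refine analyticAt_const.add ?_
    exact ((LinearMap.toContinuousLinearMap D).comp
      (wof.comp (ContinuousLinearMap.fst ℂ (Matrix (Fin n) (Fin n) ℂ) (Fin l → ℂ)))).analyticAt 0
  have hGa : AnalyticAt ℂ G 0 := (hf1a.mul hf2a).sub (hf3a.mul hf1a)
  have hΦa : AnalyticAt ℂ Φ 0 :=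
    hGa.prod ((ContinuousLinearMap.snd ℂ (Matrix (Fin n) (Fin n) ℂ) (Fin l → ℂ)).analyticAt 0)
  -- the derivative of Φ at 0
  set B' : (Fin l → ℂ) →L[ℂ] (Matrix (Fin n) (Fin n) ℂ) := fderiv ℂ ℬ 0 with hB'def
  have hB'd : HasFDerivAt ℬ B' 0 := hℬM.differentiableAt.hasFDerivAt
  set G' : ((Matrix (Fin n) (Fin n) ℂ) × (Fin l → ℂ)) →L[ℂ] (Matrix (Fin n) (Fin n) ℂ) :=
    (ContinuousLinearMap.fst ℂ (Matrix (Fin n) (Fin n) ℂ) (Fin l → ℂ)) + B'.comp (ContinuousLinearMap.snd ℂ (Matrix (Fin n) (Fin n) ℂ) (Fin l → ℂ)) with hG'def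
  have hGd : HasFDerivAt G G' 0 := by
    have hf1d : HasFDerivAt (fun p : (Matrix (Fin n) (Fin n) ℂ) × (Fin l → ℂ) => 1 + Xof p.1)
        (Xof.comp (ContinuousLinearMap.fst ℂ (Matrix (Fin n) (Fin n) ℂ) (Fin l → ℂ))) 0 :=
      ((Xof.comp (ContinuousLinearMap.fst ℂ (Matrix (Fin n) (Fin n) ℂ) (Fin l → ℂ))).hasFDerivAt).const_add 1
    have hf2d : HasFDerivAt (fun p : (Matrix (Fin n) (Fin n) ℂ) × (Fin l → ℂ) => ℬ p.2)
        (B'.comp (ContinuousLinearMap.snd ℂ (Matrix (Fin n) (Fin n) ℂ) (Fin l → ℂ))) 0 :=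
      HasFDerivAt.comp (0 : (Matrix (Fin n) (Fin n) ℂ) × (Fin l → ℂ)) hB'd (ContinuousLinearMap.snd ℂ (Matrix (Fin n) (Fin n) ℂ) (Fin l → ℂ)).hasFDerivAt
    have hf3d : HasFDerivAt (fun p : (Matrix (Fin n) (Fin n) ℂ) × (Fin l → ℂ) => A + D (wof p.1))
        ((LinearMap.toContinuousLinearMap D).comp
          (wof.comp (ContinuousLinearMap.fst ℂ (Matrix (Fin n) (Fin n) ℂ) (Fin l → ℂ)))) 0 :=
      (((LinearMap.toContinuousLinearMap D).comp
          (wof.comp (ContinuousLinearMap.fst ℂ (Matrix (Fin n) (Fin n) ℂ) (Fin l → ℂ)))).hasFDerivAt).const_add A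
    have hd := (hf1d.mul' hf2d).sub (hf3d.mul' hf1d)
    refine hd.congr_fderiv (Eq.symm ?_)
    apply ContinuousLinearMap.ext
    intro p
    have h1 := hXW p.1
    show G' p = (1 + Xof (0 : (Matrix (Fin n) (Fin n) ℂ) × (Fin l → ℂ)).1) * B' p.2 + Xof p.1 * ℬ (0 : (Matrix (Fin n) (Fin n) ℂ) × (Fin l → ℂ)).2 - ((A + D (wof (0 : (Matrix (Fin n) (Fin n) ℂ) × (Fin l → ℂ)).1)) * Xof p.1 + D (wof p.1) * (1 + Xof (0 : (Matrix (Fin n) (Fin n) ℂ) × (Fin l → ℂ)).1))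
    simp only [hG'def, ContinuousLinearMap.add_apply, ContinuousLinearMap.coe_comp',
      Function.comp_apply, ContinuousLinearMap.coe_fst', ContinuousLinearMap.coe_snd',
      ContinuousLinearMap.coe_sub', Pi.sub_apply, ContinuousLinearMap.smul_apply,
      ContinuousLinearMap.smulRight_apply, LinearMap.coe_toContinuousLinearMap',
      Prod.fst_zero, Prod.snd_zero, map_zero, add_zero, smul_eq_mul, hℬ0, one_mul, mul_one]
    conv_lhs => rw [← h1]
    abel
  -- the derivative of Φ as a continuous linear equivalence
  set T : ((Matrix (Fin n) (Fin n) ℂ) × (Fin l → ℂ)) ≃L[ℂ] ((Matrix (Fin n) (Fin n) ℂ) × (Fin l → ℂ)) :=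
    LinearEquiv.toContinuousLinearEquiv
      ({ toFun := fun p => (p.1 + B' p.2, p.2)
         map_add' := by
           intro p q
           refine Prod.ext ?_ rfl
           simp only [Prod.fst_add, Prod.snd_add, map_add]
           abel
         map_smul' := by
           intro c p
           refine Prod.ext ?_ rfl
           simp only [Prod.smul_fst, Prod.smul_snd, _root_.map_smul, RingHom.id_apply, smul_add]
         invFun := fun p => (p.1 - B' p.2, p.2)
         left_inv := by intro p; simp
         right_inv := by intro p; simp } : ((Matrix (Fin n) (Fin n) ℂ) × (Fin l → ℂ)) ≃ₗ[ℂ] ((Matrix (Fin n) (Fin n) ℂ) × (Fin l → ℂ))) with hT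
  have hTcoe : (T : ((Matrix (Fin n) (Fin n) ℂ) × (Fin l → ℂ)) →L[ℂ] ((Matrix (Fin n) (Fin n) ℂ) × (Fin l → ℂ)))
      = G'.prod (ContinuousLinearMap.snd ℂ (Matrix (Fin n) (Fin n) ℂ) (Fin l → ℂ)) := by
    apply ContinuousLinearMap.ext; intro p; rfl
  have hΦd : HasFDerivAt Φ (T : ((Matrix (Fin n) (Fin n) ℂ) × (Fin l → ℂ)) →L[ℂ] ((Matrix (Fin n) (Fin n) ℂ) × (Fin l → ℂ))) 0 := by
    rw [hTcoe]
    exact hGd.prodMk (ContinuousLinearMap.snd ℂ (Matrix (Fin n) (Fin n) ℂ) (Fin l → ℂ)).hasFDerivAt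
  have hΦs : HasStrictFDerivAt Φ (T : ((Matrix (Fin n) (Fin n) ℂ) × (Fin l → ℂ)) →L[ℂ] ((Matrix (Fin n) (Fin n) ℂ) × (Fin l → ℂ))) 0 :=
    (hΦa.contDiffAt (n := 1)).hasStrictFDerivAt' hΦd one_ne_zero
  set F := hΦs.toOpenPartialHomeomorph Φ with hF
  have h0src : (0 : (Matrix (Fin n) (Fin n) ℂ) × (Fin l → ℂ)) ∈ F.source := hΦs.mem_toOpenPartialHomeomorph_source
  have hcoeF : (F : (Matrix (Fin n) (Fin n) ℂ) × (Fin l → ℂ) → (Matrix (Fin n) (Fin n) ℂ) × (Fin l → ℂ)) = Φ := hΦs.toOpenPartialHomeomorph_coe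
  have hF0 : F 0 = 0 := by rw [show F 0 = Φ 0 from congrFun hcoeF 0, hΦ00]
  have h0tgt : (0 : (Matrix (Fin n) (Fin n) ℂ) × (Fin l → ℂ)) ∈ F.target := by
    have := F.map_source h0src
    rwa [hF0] at this
  have hsymm : AnalyticAt ℂ F.symm 0 := by
    have h1 := F.analyticAt_symm' (i := T) h0src (by rw [hcoeF]; exact hΦa)
      (by rw [hcoeF]; exact hΦd.fderiv)
    rwa [hF0] at h1
  set σ : (Fin l → ℂ) → (Matrix (Fin n) (Fin n) ℂ) × (Fin l → ℂ) := fun ε => F.symm (0, ε) with hσ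
  have hσa : AnalyticAt ℂ σ 0 :=
    AnalyticAt.comp (g := F.symm) (f := fun ε : (Fin l → ℂ) => ((0 : (Matrix (Fin n) (Fin n) ℂ)), ε)) (x := 0) hsymm
      ((ContinuousLinearMap.inr ℂ (Matrix (Fin n) (Fin n) ℂ) (Fin l → ℂ)).analyticAt 0)
  have hσ0 : σ 0 = 0 := by
    have h1 := F.left_inv h0src
    rw [hF0] at h1
    exact h1
  have h𝓘Ma : AnalyticAt ℂ (fun ε => 1 + Xof (σ ε).1) 0 :=
    analyticAt_const.add (AnalyticAt.comp (g := fun p : (Matrix (Fin n) (Fin n) ℂ) × (Fin l → ℂ) => Xof p.1) (f := σ) (x := 0)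
      ((Xof.comp (ContinuousLinearMap.fst ℂ (Matrix (Fin n) (Fin n) ℂ) (Fin l → ℂ))).analyticAt (σ 0)) hσa)
  have h𝓘0 : (1 : (Matrix (Fin n) (Fin n) ℂ)) + Xof (σ 0).1 = 1 := by rw [hσ0]; simp
  refine ⟨fun ε => wof (σ ε).1, fun ε => 1 + Xof (σ ε).1, ?_, ?_, ?_, ?_, ?_⟩
  · intro i
    exact AnalyticAt.comp (g := fun p : (Matrix (Fin n) (Fin n) ℂ) × (Fin l → ℂ) => wof p.1 i) (f := σ) (x := 0)
      (((ContinuousLinearMap.proj (R := ℂ) (φ := fun _ : Fin k => ℂ) i).comp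
        (wof.comp (ContinuousLinearMap.fst ℂ (Matrix (Fin n) (Fin n) ℂ) (Fin l → ℂ)))).analyticAt (σ 0)) hσa
  · show wof (σ 0).1 = 0
    rw [hσ0]
    simp
  · exact analyticAt_matrix_iff.1 h𝓘Ma
  · exact h𝓘0
  · have hIunit : ∀ᶠ ε in nhds (0 : (Fin l → ℂ)), IsUnit ((1 : (Matrix (Fin n) (Fin n) ℂ)) + Xof (σ ε).1) := by
      have hc : ContinuousAt (fun ε => (1 : (Matrix (Fin n) (Fin n) ℂ)) + Xof (σ ε).1) 0 := h𝓘Ma.continuousAt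
      have hmem : {B : (Matrix (Fin n) (Fin n) ℂ) | IsUnit B} ∈ nhds ((1:(Matrix (Fin n) (Fin n) ℂ)) + Xof (σ 0).1) := by
        rw [h𝓘0]
        exact Units.isOpen.mem_nhds isUnit_one
      exact hc.eventually_mem hmem
    have htgt : ∀ᶠ ε in nhds (0 : (Fin l → ℂ)), ((0 : (Matrix (Fin n) (Fin n) ℂ)), ε) ∈ F.target := by
      have hc : ContinuousAt (fun ε : (Fin l → ℂ) => ((0 : (Matrix (Fin n) (Fin n) ℂ)), ε)) 0 :=
        (ContinuousLinearMap.inr ℂ (Matrix (Fin n) (Fin n) ℂ) (Fin l → ℂ)).continuous.continuousAt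
      exact hc.eventually_mem (F.open_target.mem_nhds h0tgt)
    filter_upwards [htgt, hIunit] with ε htε huε
    refine ⟨huε, ?_⟩
    have hright : F (F.symm ((0 : (Matrix (Fin n) (Fin n) ℂ)), ε)) = ((0 : (Matrix (Fin n) (Fin n) ℂ)), ε) := F.right_inv htε
    have hΦσ : Φ (σ ε) = ((0 : (Matrix (Fin n) (Fin n) ℂ)), ε) := by
      rw [← hcoeF]
      exact hright
    have h2 : (σ ε).2 = ε := congrArg Prod.snd hΦσ
    have hGσ : G (σ ε) = 0 := congrArg Prod.fst hΦσ
    have heq : (1 + Xof (σ ε).1) * ℬ ε = (A + D (wof (σ ε).1)) * (1 + Xof (σ ε).1) := by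
      rw [hGdef] at hGσ
      simp only at hGσ
      rw [h2] at hGσ
      exact sub_eq_zero.mp hGσ
    have hdet : IsUnit ((1 + Xof (σ ε).1)).det := (Matrix.isUnit_iff_isUnit_det _).mp huε
    calc ℬ ε = ((1 + Xof (σ ε).1))⁻¹ * ((1 + Xof (σ ε).1) * ℬ ε) := by
          rw [← Matrix.mul_assoc, Matrix.nonsing_inv_mul _ hdet, Matrix.one_mul]
      _ = (1 + Xof (σ ε).1)⁻¹ * ((A + D (wof (σ ε).1)) * (1 + Xof (σ ε).1)) := by rw [heq]
      _ = (1 + Xof (σ ε).1)⁻¹ * ((fun δ => A + D δ) (wof (σ ε).1)) * (1 + Xof (σ ε).1) := by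
          rw [Matrix.mul_assoc]

/-- Arnold's versality criterion: `A + D(δ)` is a versal deformation of `A` if and only if
`ℂ^{n×n} = T(A) + range D`, where `T(A) = { XA - AX }` is the tangent space to the
similarity orbit of `A` at `A`. -/
theorem isVersal_iff_tangent_sup_range (n k : ℕ) (A : Matrix (Fin n) (Fin n) ℂ)
    (D : (Fin k → ℂ) →ₗ[ℂ] Matrix (Fin n) (Fin n) ℂ) :
    IsVersal n k A (fun δ => A + D δ) ↔
      LinearMap.range (LinearMap.mulRight ℂ A - LinearMap.mulLeft ℂ A) ⊔ LinearMap.range D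
        = (⊤ : Submodule ℂ (Matrix (Fin n) (Fin n) ℂ)) := by
  exact ⟨arnold_easy_dir n k A D, arnold_hard_dir n k A D⟩

end
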